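/- For all k ≤ n, the support-rank of HD_{≥k}^n satisfies suprank(HD_{≥k}^n) ≥ 2^k. -/

import Mathlib

open Matrix

/-- The support-rank of a boolean matrix: the minimum rank of a real matrix with
the same support. -/
noncomputable def suprank {I J : Type*} [Fintype J] (M : Matrix I J Bool) : ℕ :=
  sInf {r : ℕ | ∃ A : Matrix I J ℝ, A.rank = r ∧
    ∀ i j, A i j = 0 ↔ M i j = false}

/-- The ≥k-Hamming Distance matrix on n bits. -/
def HDge (n k : ℕ) : Matrix (Fin n → Bool) (Fin n → Bool) Bool :=
  Matrix.of fun x y => decide (k ≤ hammingDist x y)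

/-- If a matrix has `card ι` linearly independent rows, its rank is at least `card ι`. -/
lemma card_le_rank_of_rows {I J ι : Type*} [Fintype I] [Fintype J] [Fintype ι]
    (A : Matrix I J ℝ) (v : ι → I)
    (hli : LinearIndependent ℝ (fun u => A (v u))) :
    Fintype.card ι ≤ A.rank := by
  have h1 : A.rank = Module.finrank ℝ (Submodule.span ℝ (Set.range A)) := by
    rw [← Matrix.rank_transpose A, Matrix.rank_eq_finrank_span_cols]
    rfl
  rw [h1, ← finrank_span_eq_card hli]
  apply Submodule.finrank_mono
  apply Submodule.span_mono
  rintro _ ⟨u, rfl⟩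
  exact ⟨v u, rfl⟩

theorem stmt2 (n k : ℕ) (hk : k ≤ n) : 2 ^ k ≤ suprank (HDge n k) := by
  -- the embedding of k-bit strings into n-bit strings
  set e : (Fin k → Bool) → (Fin n → Bool) :=
    fun u i => if h : (i : ℕ) < k then u ⟨i, h⟩ else false with he
  set σ : (Fin k → Bool) → (Fin k → Bool) := fun u i => !u i with hσ
  have hσinj : Function.Injective σ := by
    intro a b hab
    funext i
    have := congrFun hab i
    simpa [hσ] using this
  -- the differing positions of `e u` and `e v`
  have hfilter : ∀ u v : Fin k → Bool,
      (Finset.univ.filter (fun i : Fin n => e u i ≠ e v i)) ⊆ (Finset.univ.filter (fun i : Fin n => (i : ℕ) < k)) := by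
    intro u v i hi
    simp only [Finset.mem_filter, Finset.mem_univ, true_and] at hi ⊢
    by_contra h
    exact hi (by simp [he, h])
  have hcardk : (Finset.univ.filter (fun i : Fin n => (i : ℕ) < k)).card = k := by
    have : (Finset.univ.filter (fun i : Fin n => (i : ℕ) < k)) =
        Finset.map (Fin.castLEEmb hk) Finset.univ := by
      ext i
      simp only [Finset.mem_filter, Finset.mem_univ, true_and, Finset.mem_map,
        Fin.castLEEmb_apply]
      constructor
      · intro h; exact ⟨⟨i, h⟩, by simp [Fin.ext_iff]⟩
      · rintro ⟨j, rfl⟩; exact j.2.trans_le (le_refl _) |>.trans_le (le_refl _)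
    rw [this, Finset.card_map, Finset.card_univ, Fintype.card_fin]
  -- distance is exactly k when v = σ u
  have hdist_eq : ∀ u : Fin k → Bool, k ≤ hammingDist (e u) (e (σ u)) := by
    intro u
    have : (Finset.univ.filter (fun i : Fin n => e u i ≠ e (σ u) i)) =
        (Finset.univ.filter (fun i : Fin n => (i : ℕ) < k)) := by
      apply Finset.Subset.antisymm (hfilter _ _)
      intro i hi
      simp only [Finset.mem_filter, Finset.mem_univ, true_and] at hi ⊢
      simp [he, hσ, hi]
    unfold hammingDist
    rw [this, hcardk]
  -- distance < k when v ≠ σ u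
  have hdist_lt : ∀ u v : Fin k → Bool, v ≠ σ u → hammingDist (e u) (e v) < k := by
    intro u v hne
    have hex : ∃ i₀ : Fin k, v i₀ = u i₀ := by
      by_contra h
      push_neg at h
      apply hne
      funext i
      have := h i
      simp only [hσ]
      cases hui : u i <;> cases hvi : v i <;> simp_all
    obtain ⟨i₀, hi₀⟩ := hex
    have hss : (Finset.univ.filter (fun i : Fin n => e u i ≠ e v i)) ⊂
        (Finset.univ.filter (fun i : Fin n => (i : ℕ) < k)) := by
      refine ⟨hfilter _ _, fun hsub => ?_⟩
      have hmem : (Fin.castLE hk i₀) ∈ (Finset.univ.filter (fun i : Fin n => (i : ℕ) < k)) := by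
        simp [i₀.2]
      have := hsub hmem
      simp only [Finset.mem_filter, Finset.mem_univ, true_and] at this
      apply this
      simp [he, i₀.2, hi₀]
    calc hammingDist (e u) (e v) < (Finset.univ.filter (fun i : Fin n => (i : ℕ) < k)).card :=
          Finset.card_lt_card hss
      _ = k := hcardk
  -- now the main argument
  apply le_csInf
  · exact ⟨(Matrix.of fun x y => if HDge n k x y then (1:ℝ) else 0).rank,
      Matrix.of fun x y => if HDge n k x y then (1:ℝ) else 0, rfl,
      fun i j => by by_cases h : HDge n k i j <;> simp [h]⟩
  rintro r ⟨A, rfl, hA⟩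
  have hnz : ∀ u : Fin k → Bool, A (e u) (e (σ u)) ≠ 0 := by
    intro u h
    have := (hA _ _).mp h
    simp only [HDge, Matrix.of_apply, decide_eq_false_iff_not, not_le] at this
    exact absurd (hdist_eq u) (not_le.mpr this)
  have hz : ∀ u v : Fin k → Bool, v ≠ σ u → A (e u) (e v) = 0 := by
    intro u v hne
    apply (hA _ _).mpr
    simp only [HDge, Matrix.of_apply, decide_eq_false_iff_not, not_le]
    exact hdist_lt u v hne
  have hli : LinearIndependent ℝ (fun u : Fin k → Bool => A (e u)) := by
    rw [Fintype.linearIndependent_iff]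
    intro c hc u₀
    have h0 := congrFun hc (e (σ u₀))
    simp only [Finset.sum_apply, Pi.smul_apply, smul_eq_mul, Pi.zero_apply] at h0
    rw [Finset.sum_eq_single u₀] at h0
    · have := hnz u₀
      rcases mul_eq_zero.mp h0 with h | h
      · exact h
      · exact absurd h this
    · intro u _ hu
      rw [hz u (σ u₀) (fun h => hu (hσinj h.symm)), mul_zero]
    · intro h; exact absurd (Finset.mem_univ u₀) h
  have := card_le_rank_of_rows A e hli
  simpa using this
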